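/- The function φ(q) := q^{(1−k̃)/2}·(1−q)^{(1+k̃)/2} satisfies φ''(q) = ((k̃²−1)/4)·q^{−(3+k̃)/2}·(1−q)^{−(3−k̃)/2} for every q ∈ (0,1). Consequently, since d_B > 0 and k̃ > 1, the function W satisfies W''(q) > 0 for every q ∈ (0,1), i.e., W is strictly convex on (0,1). -/

import Mathlib

set_option autoImplicit false

private lemma pow_mul_hasDerivAt (a b q : ℝ) (hq : 0 < q) (h1q : q < 1) :
    HasDerivAt (fun x : ℝ => x ^ a * (1 - x) ^ b)
      (a * q ^ (a - 1) * (1 - q) ^ b - b * q ^ a * (1 - q) ^ (b - 1)) q := by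
  have h1q' : (0:ℝ) < 1 - q := by linarith
  have h1 : HasDerivAt (fun x : ℝ => x ^ a) (a * q ^ (a - 1)) q :=
    Real.hasDerivAt_rpow_const (Or.inl hq.ne')
  have h2 : HasDerivAt (fun x : ℝ => 1 - x) (0 - 1) q :=
    (hasDerivAt_const q 1).sub (hasDerivAt_id q)
  have h3 : HasDerivAt (fun x : ℝ => (1 - x) ^ b)
      ((0 - 1) * b * (1 - q) ^ (b - 1)) q :=
    h2.rpow_const (Or.inl h1q'.ne')
  have := h1.fun_mul h3
  exact this.congr_deriv (by ring)

private lemma f1_hasDerivAt (a b q : ℝ) (hq : 0 < q) (h1q : q < 1) :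
    HasDerivAt (fun x : ℝ =>
        a * x ^ (a - 1) * (1 - x) ^ b - b * x ^ a * (1 - x) ^ (b - 1))
      (a * ((a - 1) * q ^ (a - 1 - 1) * (1 - q) ^ b - b * q ^ (a - 1) * (1 - q) ^ (b - 1))
        - b * (a * q ^ (a - 1) * (1 - q) ^ (b - 1) - (b - 1) * q ^ a * (1 - q) ^ (b - 1 - 1)))
      q := by
  have t1 := (pow_mul_hasDerivAt (a - 1) b q hq h1q).const_mul a
  have t2 := (pow_mul_hasDerivAt a (b - 1) q hq h1q).const_mul b
  have := t1.fun_sub t2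
  refine (this.congr_deriv (by ring)).congr_of_eventuallyEq
    (Filter.Eventually.of_forall fun y => ?_)
  dsimp only
  ring

private lemma second_deriv_value (kt q : ℝ) (hq : 0 < q) (h1q : q < 1) :
    ((1 - kt) / 2) * (((1 - kt) / 2 - 1) * q ^ ((1 - kt) / 2 - 1 - 1) * (1 - q) ^ ((1 + kt) / 2)
        - ((1 + kt) / 2) * q ^ ((1 - kt) / 2 - 1) * (1 - q) ^ ((1 + kt) / 2 - 1))
      - ((1 + kt) / 2) * (((1 - kt) / 2) * q ^ ((1 - kt) / 2 - 1) * (1 - q) ^ ((1 + kt) / 2 - 1)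
        - ((1 + kt) / 2 - 1) * q ^ ((1 - kt) / 2) * (1 - q) ^ ((1 + kt) / 2 - 1 - 1))
      = ((kt ^ 2 - 1) / 4) * q ^ (-(3 + kt) / 2) * (1 - q) ^ (-(3 - kt) / 2) := by
  have h1q' : (0:ℝ) < 1 - q := by linarith
  have ea1 : q ^ ((1 - kt) / 2 - 1) = q ^ ((1 - kt) / 2 - 1 - 1) * q := by
    rw [← Real.rpow_add_one hq.ne']; congr 1; ring
  have ea0 : q ^ ((1 - kt) / 2) = q ^ ((1 - kt) / 2 - 1 - 1) * q * q := by
    rw [← Real.rpow_add_one hq.ne', ← Real.rpow_add_one hq.ne']; congr 1; ring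
  have eb1 : (1 - q) ^ ((1 + kt) / 2 - 1) = (1 - q) ^ ((1 + kt) / 2 - 1 - 1) * (1 - q) := by
    rw [← Real.rpow_add_one h1q'.ne']; congr 1; ring
  have eb0 : (1 - q) ^ ((1 + kt) / 2)
      = (1 - q) ^ ((1 + kt) / 2 - 1 - 1) * (1 - q) * (1 - q) := by
    rw [← Real.rpow_add_one h1q'.ne', ← Real.rpow_add_one h1q'.ne']; congr 1; ring
  have et1 : q ^ (-(3 + kt) / 2) = q ^ ((1 - kt) / 2 - 1 - 1) := by
    norm_num; ring_nf
  have et2 : (1 - q) ^ (-(3 - kt) / 2) = (1 - q) ^ ((1 + kt) / 2 - 1 - 1) := by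
    norm_num; ring_nf
  rw [ea1, ea0, eb1, eb0, et1, et2]
  ring

theorem stmt_11 (l μ h ρ σt R : ℝ)
    (hl : 0 < l) (hlμ : l < μ) (hμh : μ < h) (hρ : 0 < ρ) (hσt : 0 < σt)
    (hR : 0 < R) (hlR : l < μ - R)
    (kt qB dB : ℝ)
    (hkt : kt = Real.sqrt (1 + 8 * ρ * (σt / (h - l)) ^ 2))
    (hqB : qB = (l - μ + R) * ((1 - kt) / 2)
      / ((h - l) * ((1 + kt) / 2) + l - μ + R))
    (hdB : dB = (μ - R - qB * h - (1 - qB) * l)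
      / (qB ^ ((1 - kt) / 2) * (1 - qB) ^ ((1 + kt) / 2)))
    (φ W : ℝ → ℝ)
    (hφ : ∀ q : ℝ, φ q = q ^ ((1 - kt) / 2) * (1 - q) ^ ((1 + kt) / 2))
    (hW : ∀ q : ℝ, W q = q * h + (1 - q) * l + dB * φ q) :
    (∀ q ∈ Set.Ioo (0 : ℝ) 1,
      deriv (deriv φ) q
        = ((kt ^ 2 - 1) / 4) * q ^ (-(3 + kt) / 2) * (1 - q) ^ (-(3 - kt) / 2))
    ∧ (∀ q ∈ Set.Ioo (0 : ℝ) 1, 0 < deriv (deriv W) q)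
    ∧ StrictConvexOn ℝ (Set.Ioo (0 : ℝ) 1) W := by
  have hhl : 0 < h - l := by linarith
  -- kt > 1
  have hkt1 : 1 < kt := by
    rw [hkt]
    have h2 : (0:ℝ) < 8 * ρ * (σt / (h - l)) ^ 2 := by positivity
    nlinarith [Real.sq_sqrt (by linarith : (0:ℝ) ≤ 1 + 8 * ρ * (σt / (h - l)) ^ 2),
      Real.sqrt_nonneg (1 + 8 * ρ * (σt / (h - l)) ^ 2)]
  -- qB ∈ (0,1) and dB > 0
  have hA : 0 < μ - R - l := by linarith
  have hAB : μ - R - l < h - l := by linarith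
  have hden : 0 < (h - l) * ((1 + kt) / 2) + l - μ + R := by nlinarith
  have hqB0 : 0 < qB := by
    rw [hqB]
    apply div_pos _ hden
    nlinarith
  have hqB1 : qB < 1 := by
    rw [hqB, div_lt_one hden]
    nlinarith
  have hnum : 0 < μ - R - qB * h - (1 - qB) * l := by
    have h1 : qB * (h - l) < μ - R - l := by
      rw [hqB, div_mul_eq_mul_div, div_lt_iff₀ hden]
      nlinarith
    nlinarith
  have hdB0 : 0 < dB := by
    rw [hdB]
    exact div_pos hnum (mul_pos (Real.rpow_pos_of_pos hqB0 _)
      (Real.rpow_pos_of_pos (by linarith) _))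
  set a : ℝ := (1 - kt) / 2 with ha
  set b : ℝ := (1 + kt) / 2 with hb
  -- derivative of φ
  have hφfun : φ = fun x : ℝ => x ^ a * (1 - x) ^ b := funext hφ
  set f1 : ℝ → ℝ := fun x =>
    a * x ^ (a - 1) * (1 - x) ^ b - b * x ^ a * (1 - x) ^ (b - 1) with hf1
  have hd1 : ∀ q ∈ Set.Ioo (0:ℝ) 1, HasDerivAt φ (f1 q) q := by
    intro q hq
    rw [hφfun]
    exact pow_mul_hasDerivAt a b q hq.1 hq.2
  have hderivφ : ∀ q ∈ Set.Ioo (0:ℝ) 1, deriv φ q = f1 q :=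
    fun q hq => (hd1 q hq).deriv
  have hd2val : ∀ q : ℝ, 0 < q → q < 1 →
      (a * ((a - 1) * q ^ (a - 1 - 1) * (1 - q) ^ b - b * q ^ (a - 1) * (1 - q) ^ (b - 1))
        - b * (a * q ^ (a - 1) * (1 - q) ^ (b - 1) - (b - 1) * q ^ a * (1 - q) ^ (b - 1 - 1)))
      = ((kt ^ 2 - 1) / 4) * q ^ (-(3 + kt) / 2) * (1 - q) ^ (-(3 - kt) / 2) := by
    intro q hq0 hq1
    exact second_deriv_value kt q hq0 hq1
  have key1 : ∀ q ∈ Set.Ioo (0:ℝ) 1,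
      deriv (deriv φ) q
        = ((kt ^ 2 - 1) / 4) * q ^ (-(3 + kt) / 2) * (1 - q) ^ (-(3 - kt) / 2) := by
    intro q hq
    have heq : deriv φ =ᶠ[nhds q] f1 :=
      Filter.eventuallyEq_of_mem (isOpen_Ioo.mem_nhds hq) hderivφ
    rw [heq.deriv_eq, hf1, (f1_hasDerivAt a b q hq.1 hq.2).deriv]
    exact hd2val q hq.1 hq.2
  refine ⟨key1, ?_, ?_⟩
  -- W part
  all_goals {
    have hWfun : W = fun x : ℝ => x * h + (1 - x) * l + dB * φ x := funext hW
    set g1 : ℝ → ℝ := fun x => h - l + dB * f1 x with hg1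
    have hdW1 : ∀ q ∈ Set.Ioo (0:ℝ) 1, HasDerivAt W (g1 q) q := by
      intro q hq
      rw [hWfun]
      have t1 : HasDerivAt (fun x : ℝ => x * h) h q := by
        simpa using (hasDerivAt_id q).mul_const h
      have t2 : HasDerivAt (fun x : ℝ => (1 - x) * l) (-l) q := by
        have := ((hasDerivAt_const q (1:ℝ)).sub (hasDerivAt_id q)).mul_const l
        simpa using this
      have t3 := (hd1 q hq).const_mul dB
      have := (t1.fun_add t2).fun_add t3
      refine this.congr_deriv ?_
      simp only [hg1]
      ring
    have hderivW : ∀ q ∈ Set.Ioo (0:ℝ) 1, deriv W q = g1 q :=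
      fun q hq => (hdW1 q hq).deriv
    have keyW : ∀ q ∈ Set.Ioo (0:ℝ) 1,
        deriv (deriv W) q
          = dB * (((kt ^ 2 - 1) / 4) * q ^ (-(3 + kt) / 2) * (1 - q) ^ (-(3 - kt) / 2)) := by
      intro q hq
      have heq : deriv W =ᶠ[nhds q] g1 :=
        Filter.eventuallyEq_of_mem (isOpen_Ioo.mem_nhds hq) hderivW
      have hg1d : HasDerivAt g1
          (dB * (a * ((a - 1) * q ^ (a - 1 - 1) * (1 - q) ^ b
              - b * q ^ (a - 1) * (1 - q) ^ (b - 1))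
            - b * (a * q ^ (a - 1) * (1 - q) ^ (b - 1)
              - (b - 1) * q ^ a * (1 - q) ^ (b - 1 - 1)))) q := by
        have := ((f1_hasDerivAt a b q hq.1 hq.2).const_mul dB).const_add (h - l)
        exact this
      rw [heq.deriv_eq, hg1d.deriv, hd2val q hq.1 hq.2]
    have keyWpos : ∀ q ∈ Set.Ioo (0:ℝ) 1, 0 < deriv (deriv W) q := by
      intro q hq
      rw [keyW q hq]
      have h1q : (0:ℝ) < 1 - q := by linarith [hq.2]
      have hc : 0 < (kt ^ 2 - 1) / 4 := by nlinarith
      exact mul_pos hdB0 (mul_pos (mul_pos hc (Real.rpow_pos_of_pos hq.1 _))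
        (Real.rpow_pos_of_pos h1q _))
    first
    | exact keyWpos
    | { refine strictConvexOn_of_deriv2_pos (convex_Ioo 0 1) ?_ ?_
        · intro x hx
          exact (hdW1 x hx).continuousAt.continuousWithinAt
        · intro x hx
          rw [interior_Ioo] at hx
          simpa [Function.iterate_succ, Function.comp] using keyWpos x hx }
  }
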